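/- arXiv:2302.06804 — 2 statements merged into one kernel-verified Lean document; each statement's English description precedes it below -/
import Mathlib

section
/- In the chain SCM X₁ → Y → X₂ with Y = X₁ + U_Y, X₂ = α₂Y + U₂, var(X₁) = var(U_Y) = 1/ε, var(U₂) = ε⁴, α₂ = ε, quadratic cost a₁² + a₂² ≤ 1: any linear mechanism w with MSE o(ε) satisfies |w₂α₂ - 1| = o(ε) and |w₁ + α₂w₂ - 1| = o(ε), hence w₂ = 1/ε + o(1), w₁ = o(ε), and the improvement (w₁+α₂w₂)/sqrt((w₁+α₂w₂)²+w₂²) is O(ε), while the optimal improvement is 1. -/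
open Asymptotics Filter

private lemma sq_div_littleO (f : ℝ → ℝ)
    (hf : (fun ε => f ε ^ 2 * (1 / ε)) =o[nhdsWithin 0 (Set.Ioi 0)] fun ε => ε) :
    f =o[nhdsWithin 0 (Set.Ioi 0)] fun ε => ε := by
  rw [isLittleO_iff] at hf ⊢
  intro c hc
  filter_upwards [hf (show (0:ℝ) < c ^ 2 by positivity), self_mem_nhdsWithin] with ε hb hε
  simp only [Set.mem_Ioi] at hε
  simp only [Real.norm_eq_abs] at hb ⊢
  rw [abs_of_pos hε] at hb ⊢
  have h1 : |f ε ^ 2 * (1 / ε)| = f ε ^ 2 / ε := by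
    rw [abs_of_nonneg]; · ring
    · positivity
  rw [h1, div_le_iff₀ hε] at hb
  have h2 : f ε ^ 2 ≤ (c * ε) ^ 2 := by nlinarith
  nlinarith [abs_nonneg (f ε), sq_abs (f ε), mul_pos hc hε]

/-- Tradeoff with a weak proxy (`α₂ = ε`, `var(X₁) = var(U_Y) = 1/ε`, `var(U₂) = ε⁴`):
any mechanism family with MSE `o(ε)` has `w₂α₂ - 1 = o(ε)`, `w₁ + α₂w₂ - 1 = o(ε)`,
hence `w₂ = 1/ε + o(1)`, `w₁ = o(ε)`, and improvement `O(ε)`, while the optimal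
improvement is `1`. -/
theorem stmt8 (w1 w2 : ℝ → ℝ)
    (h : (fun ε => (w1 ε + ε * w2 ε - 1) ^ 2 * (1 / ε)
        + (w2 ε * ε - 1) ^ 2 * (1 / ε) + (w2 ε) ^ 2 * ε ^ 4)
      =o[nhdsWithin 0 (Set.Ioi 0)] fun ε => ε) :
    ((fun ε => w2 ε * ε - 1) =o[nhdsWithin 0 (Set.Ioi 0)] fun ε => ε) ∧
    ((fun ε => w1 ε + ε * w2 ε - 1) =o[nhdsWithin 0 (Set.Ioi 0)] fun ε => ε) ∧
    ((fun ε => w2 ε - 1 / ε) =o[nhdsWithin 0 (Set.Ioi 0)] fun _ => (1 : ℝ)) ∧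
    ((fun ε => w1 ε) =o[nhdsWithin 0 (Set.Ioi 0)] fun ε => ε) ∧
    ((fun ε => (w1 ε + ε * w2 ε) / Real.sqrt ((w1 ε + ε * w2 ε) ^ 2 + (w2 ε) ^ 2))
        =O[nhdsWithin 0 (Set.Ioi 0)] fun ε => ε) ∧
    ((∀ a b : ℝ, a / Real.sqrt (a ^ 2 + b ^ 2) ≤ 1) ∧
      (1 : ℝ) / Real.sqrt (1 ^ 2 + 0 ^ 2) = 1) := by
  set l := nhdsWithin (0:ℝ) (Set.Ioi 0)
  -- each summand is little-o of ε
  have hterm : ∀ᶠ ε in l,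
      0 ≤ (w1 ε + ε * w2 ε - 1) ^ 2 * (1 / ε) ∧ 0 ≤ (w2 ε * ε - 1) ^ 2 * (1 / ε)
        ∧ 0 ≤ (w2 ε) ^ 2 * ε ^ 4 := by
    filter_upwards [self_mem_nhdsWithin] with ε hε
    simp only [Set.mem_Ioi] at hε
    refine ⟨by positivity, by positivity, by positivity⟩
  have hO1 : (fun ε => (w1 ε + ε * w2 ε - 1) ^ 2 * (1 / ε)) =O[l]
      (fun ε => (w1 ε + ε * w2 ε - 1) ^ 2 * (1 / ε)
        + (w2 ε * ε - 1) ^ 2 * (1 / ε) + (w2 ε) ^ 2 * ε ^ 4) := by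
    rw [isBigO_iff]
    refine ⟨1, ?_⟩
    filter_upwards [hterm] with ε ⟨h1, h2, h3⟩
    simp only [Real.norm_eq_abs]
    rw [one_mul, abs_of_nonneg h1, abs_of_nonneg (by linarith)]
    linarith
  have hO2 : (fun ε => (w2 ε * ε - 1) ^ 2 * (1 / ε)) =O[l]
      (fun ε => (w1 ε + ε * w2 ε - 1) ^ 2 * (1 / ε)
        + (w2 ε * ε - 1) ^ 2 * (1 / ε) + (w2 ε) ^ 2 * ε ^ 4) := by
    rw [isBigO_iff]
    refine ⟨1, ?_⟩
    filter_upwards [hterm] with ε ⟨h1, h2, h3⟩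
    simp only [Real.norm_eq_abs]
    rw [one_mul, abs_of_nonneg h2, abs_of_nonneg (by linarith)]
    linarith
  have hA : (fun ε => w1 ε + ε * w2 ε - 1) =o[l] fun ε => ε :=
    sq_div_littleO _ (hO1.trans_isLittleO h)
  have hB : (fun ε => w2 ε * ε - 1) =o[l] fun ε => ε :=
    sq_div_littleO _ (hO2.trans_isLittleO h)
  refine ⟨hB, hA, ?_, ?_, ?_, ?_, ?_⟩
  · -- w2 - 1/ε = o(1)
    rw [isLittleO_iff] at hB ⊢
    intro c hc
    filter_upwards [hB hc, self_mem_nhdsWithin] with ε hb hε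
    simp only [Set.mem_Ioi] at hε
    simp only [Real.norm_eq_abs] at hb ⊢
    have hεne : ε ≠ 0 := ne_of_gt hε
    have : w2 ε - 1 / ε = (w2 ε * ε - 1) / ε := by field_simp
    rw [this, abs_div, abs_of_pos hε, div_le_iff₀ hε]
    rw [abs_of_pos hε] at hb
    simpa using hb
  · -- w1 = o(ε)
    have := hA.sub hB
    exact this.congr_left (fun ε => by ring)
  · -- improvement is O(ε)
    rw [isBigO_iff]
    refine ⟨4, ?_⟩
    have hBd : ∀ᶠ ε in l, |w2 ε * ε - 1| ≤ (1/2) * |ε| := by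
      have := hB.def (by norm_num : (0:ℝ) < 1/2); exact this
    have hAd : ∀ᶠ ε in l, |w1 ε + ε * w2 ε - 1| ≤ 1 * |ε| := hA.def one_pos
    have hlt1 : ∀ᶠ ε in l, ε < 1 :=
      eventually_nhdsWithin_of_eventually_nhds (gt_mem_nhds one_pos)
    filter_upwards [hBd, hAd, hlt1, self_mem_nhdsWithin] with ε hb ha h1 hε
    simp only [Set.mem_Ioi] at hε
    simp only [Real.norm_eq_abs]
    rw [abs_of_pos hε] at hb ha ⊢
    -- w2 ε ≥ 1/(2ε)
    have habs : |w2 ε * ε - 1| ≤ 1/2 := le_trans hb (by nlinarith)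
    rw [abs_le] at habs
    have hw2 : 1 / (2 * ε) ≤ w2 ε := by
      rw [div_le_iff₀ (by linarith)]
      nlinarith [habs.1]
    have hw2pos : 0 < w2 ε := lt_of_lt_of_le (by positivity) hw2
    have hden : Real.sqrt ((w1 ε + ε * w2 ε) ^ 2 + (w2 ε) ^ 2) ≥ w2 ε := by
      have h2 : |w2 ε| = Real.sqrt ((w2 ε) ^ 2) := (Real.sqrt_sq_eq_abs _).symm
      calc w2 ε ≤ |w2 ε| := le_abs_self _
        _ ≤ Real.sqrt ((w1 ε + ε * w2 ε) ^ 2 + (w2 ε) ^ 2) := by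
            rw [h2]; exact Real.sqrt_le_sqrt (by nlinarith)
    have hdenpos : 0 < Real.sqrt ((w1 ε + ε * w2 ε) ^ 2 + (w2 ε) ^ 2) :=
      lt_of_lt_of_le hw2pos hden
    have hnum : |w1 ε + ε * w2 ε| ≤ 2 := by
      have : |w1 ε + ε * w2 ε - 1| ≤ 1 := le_trans ha (by linarith)
      rw [abs_le] at this ⊢
      constructor <;> linarith [this.1, this.2]
    rw [abs_div, abs_of_pos hdenpos, div_le_iff₀ hdenpos]
    calc |w1 ε + ε * w2 ε| ≤ 2 := hnum
      _ = (4 * ε) * (1 / (2*ε)) := by field_simp; ring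
      _ ≤ (4 * ε) * Real.sqrt ((w1 ε + ε * w2 ε) ^ 2 + (w2 ε) ^ 2) := by
          apply mul_le_mul_of_nonneg_left (le_trans hw2 hden) (by linarith)
  · intro a b
    rcases le_or_gt a 0 with ha | ha
    · exact le_trans (div_nonpos_of_nonpos_of_nonneg ha (Real.sqrt_nonneg _)) zero_le_one
    · have hle : a ≤ Real.sqrt (a ^ 2 + b ^ 2) := by
        have h2 : |a| = Real.sqrt (a ^ 2) := (Real.sqrt_sq_eq_abs _).symm
        calc a ≤ |a| := le_abs_self _
          _ ≤ Real.sqrt (a ^ 2 + b ^ 2) := by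
              rw [h2]; exact Real.sqrt_le_sqrt (by nlinarith)
      rw [div_le_one (lt_of_lt_of_le ha hle)]
      exact hle
  · norm_num
end

section
/- In the chain SCM X₁ → Y → X₂ with var(X₁) = var(U_Y) = 1/ε, var(U₂) = ε⁴, and α₂ = 1/ε (for 0 < ε < 1), the mechanism w = (0, ε) (i.e., f = (1/α₂)X₂) has MSE equal to ε⁶ and improvement 1/sqrt(1+ε²) ≥ 1 - ε, while the optimal improvement is 1. Hence a mechanism depending only on the proxy X₂ can be simultaneously near-risk-optimal and near-improvement-optimal. -/
/-- Strong proxy (`α₂ = 1/ε`): the proxy-only mechanism `w = (0, ε)` has MSE `ε⁶` and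
improvement `1/sqrt(1+ε²) ≥ 1 - ε`, while the optimal improvement is `1`. -/
theorem stmt9 (ε : ℝ) (hε : 0 < ε) (hε1 : ε < 1) :
    ∀ α2 w1 w2 : ℝ, α2 = 1 / ε → w1 = 0 → w2 = ε →
    ((w1 + α2 * w2 - 1) ^ 2 * (1 / ε) + (w2 * α2 - 1) ^ 2 * (1 / ε)
        + w2 ^ 2 * ε ^ 4 = ε ^ 6) ∧
    ((w1 + α2 * w2) / Real.sqrt ((w1 + α2 * w2) ^ 2 + w2 ^ 2)
        = 1 / Real.sqrt (1 + ε ^ 2)) ∧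
    (1 - ε ≤ 1 / Real.sqrt (1 + ε ^ 2)) ∧
    (∀ a b : ℝ, a / Real.sqrt (a ^ 2 + b ^ 2) ≤ 1) := by
  intro α2 w1 w2 hα hw1 hw2
  subst hα; subst hw1; rw [hw2]
  have hεne : ε ≠ 0 := ne_of_gt hε
  have h1 : (0 : ℝ) + 1 / ε * ε = 1 := by field_simp; norm_num
  refine ⟨by field_simp; ring, ?_, ?_, ?_⟩
  · rw [h1]; ring_nf
  · have hs : Real.sqrt (1 + ε ^ 2) > 0 := Real.sqrt_pos.mpr (by positivity)
    rw [le_div_iff₀ hs]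
    nlinarith [Real.sq_sqrt (show (0:ℝ) ≤ 1 + ε ^ 2 by positivity),
      Real.sqrt_nonneg (1 + ε ^ 2), sq_nonneg (Real.sqrt (1 + ε ^ 2) - 1),
      sq_nonneg ε, mul_pos hε hs]
  · intro a b
    rcases le_or_gt (Real.sqrt (a ^ 2 + b ^ 2)) 0 with h | h
    · have := Real.sqrt_nonneg (a ^ 2 + b ^ 2)
      have : Real.sqrt (a ^ 2 + b ^ 2) = 0 := le_antisymm h this
      simp [this]
    · rw [div_le_one h]
      calc a ≤ |a| := le_abs_self a
        _ = Real.sqrt (a ^ 2) := (Real.sqrt_sq_eq_abs a).symm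
        _ ≤ Real.sqrt (a ^ 2 + b ^ 2) := Real.sqrt_le_sqrt (by nlinarith [sq_nonneg b])
end
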